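/- Let $X, Y$ be compact metric spaces, $\mu \in \mathcal{P}(X)$, and $\Phi(x,y,\nu) = c(x,y) + F(\nu,y)$ with $c$ continuous and $F(\nu,\cdot)$ continuous for each $\nu$. Suppose $\gamma \in \mathcal{P}(X \times Y)$ is a Cournot-Nash equilibrium with second marginal $\nu$, i.e., $\gamma$-a.e. $(x,y)$ satisfies $c(x,y) + F(\nu,y) = \min_{z \in Y}[c(x,z) + F(\nu,z)]$. Then $\gamma$ is an optimal transport plan between its marginals $\mu$ and $\nu$ for the cost $\tilde c(x,y) = c(x,y) + F(\nu,y)$, i.e., $\int \tilde c \, d\gamma = \mathcal{T}_{\tilde c}(\mu, \nu)$. -/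

import Mathlib

open MeasureTheory Set
open scoped ENNReal NNReal

/-- A Cournot-Nash equilibrium `γ` is an optimal transport plan between its marginals for
the modified cost `c̃(x,y) = c(x,y) + F(ν,y)`. -/
theorem stmt16 {X Y : Type*}
    [MetricSpace X] [CompactSpace X] [MeasurableSpace X] [BorelSpace X]
    [MetricSpace Y] [CompactSpace Y] [MeasurableSpace Y] [BorelSpace Y] [Nonempty Y]
    (μ : Measure X) [IsProbabilityMeasure μ]
    (ν : Measure Y) [IsProbabilityMeasure ν]
    (c : X → Y → ℝ) (hc : Continuous fun p : X × Y => c p.1 p.2)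
    (F : Measure Y → Y → ℝ) (hF : Continuous (F ν))
    (γ : Measure (X × Y)) [IsProbabilityMeasure γ]
    (hγ1 : γ.map Prod.fst = μ) (hγ2 : γ.map Prod.snd = ν)
    (hCN : γ {p : X × Y | c p.1 p.2 + F ν p.2 = ⨅ z : Y, (c p.1 z + F ν z)} = 1) :
    ∫ p, (c p.1 p.2 + F ν p.2) ∂γ =
      sInf {r : ℝ | ∃ η : Measure (X × Y),
        η.map Prod.fst = μ ∧ η.map Prod.snd = ν ∧
        r = ∫ p, (c p.1 p.2 + F ν p.2) ∂η} := by
  -- notation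
  set g : X × Y → ℝ := fun p => c p.1 p.2 + F ν p.2 with hg_def
  have hg : Continuous g := hc.add (hF.comp continuous_snd)
  set u : X → ℝ := fun x => ⨅ z : Y, g (x, z) with hu_def
  -- X is nonempty
  have hXne : Nonempty X := by
    by_contra h
    rw [not_nonempty_iff] at h
    have h1 : μ univ = 1 := measure_univ
    rw [eq_empty_of_isEmpty (univ : Set X), measure_empty] at h1
    exact zero_ne_one h1
  -- g is bounded below
  obtain ⟨p₀, -, hp₀⟩ :=
    isCompact_univ.exists_isMinOn (univ_nonempty (α := X × Y)) hg.continuousOn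
  have hbdd : ∀ x : X, BddBelow (Set.range fun z : Y => g (x, z)) :=
    fun x => ⟨g p₀, by rintro r ⟨z, rfl⟩; exact hp₀ (mem_univ ((x, z) : X × Y))⟩
  have hule : ∀ p : X × Y, u p.1 ≤ g p := fun p => ciInf_le (hbdd p.1) p.2
  -- u is continuous
  have hu : Continuous u := by
    rw [Metric.continuous_iff]
    intro x ε hε
    have hUC : UniformContinuous g := CompactSpace.uniformContinuous_of_continuous hg
    rw [Metric.uniformContinuous_iff] at hUC
    obtain ⟨δ, hδ, H⟩ := hUC (ε / 2) (by positivity)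
    refine ⟨δ, hδ, fun x' hx' => ?_⟩
    have key : ∀ a a' : X, dist a a' < δ → u a ≤ u a' + ε / 2 := by
      intro a a' h
      have h1 : u a - ε / 2 ≤ u a' := by
        refine le_ciInf fun z => ?_
        show u a - ε / 2 ≤ g (a', z)
        have hd : dist ((a, z) : X × Y) (a', z) < δ := by
          rw [Prod.dist_eq]
          exact max_lt h (by simpa using hδ)
        have := H hd
        rw [Real.dist_eq, abs_sub_lt_iff] at this
        have h2 : u a ≤ g (a, z) := hule (a, z)
        clear_value u g
        linarith [this.1, this.2]
      linarith
    have k1 := key x' x hx'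
    have k2 := key x x' (by rwa [dist_comm])
    rw [Real.dist_eq, abs_sub_lt_iff]
    constructor <;> linarith
  -- integrability of continuous functions w.r.t. finite measures on compact spaces
  have hint : ∀ (η : Measure (X × Y)) [IsFiniteMeasure η], Integrable g η := by
    intro η _
    exact hg.integrable_of_hasCompactSupport
      (IsCompact.of_isClosed_subset isCompact_univ (isClosed_tsupport _) (subset_univ _))
  have hintu : ∀ (η : Measure (X × Y)) [IsFiniteMeasure η],
      Integrable (fun p : X × Y => u p.1) η := by
    intro η _
    exact (hu.comp continuous_fst).integrable_of_hasCompactSupport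
      (IsCompact.of_isClosed_subset isCompact_univ (isClosed_tsupport _) (subset_univ _))
  -- any admissible plan is a probability measure
  have hprob : ∀ η : Measure (X × Y), η.map Prod.fst = μ → IsProbabilityMeasure η := by
    intro η hη
    constructor
    have : η.map Prod.fst univ = 1 := by rw [hη]; exact measure_univ
    rwa [Measure.map_apply measurable_fst MeasurableSet.univ, preimage_univ] at this
  -- lower bound: for any admissible η, ∫ u dμ ≤ ∫ g dη
  have hlb : ∀ η : Measure (X × Y), η.map Prod.fst = μ → (∫ x, u x ∂μ) ≤ ∫ p, g p ∂η := by
    intro η hη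
    have : IsProbabilityMeasure η := hprob η hη
    calc ∫ x, u x ∂μ = ∫ p, u p.1 ∂η := by
          rw [← hη, integral_map measurable_fst.aemeasurable hu.aestronglyMeasurable]
      _ ≤ ∫ p, g p ∂η := integral_mono (hintu η) (hint η) hule
  -- γ attains the lower bound
  have hγeq : ∫ p, g p ∂γ = ∫ x, u x ∂μ := by
    have hmeas : MeasurableSet {p : X × Y | g p = u p.1} :=
      measurableSet_eq_fun hg.measurable (hu.comp continuous_fst).measurable
    have hae : ∀ᵐ p ∂γ, g p = u p.1 := by
      rw [ae_iff]
      have : {p : X × Y | ¬ g p = u p.1} = {p : X × Y | g p = u p.1}ᶜ := rfl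
      rw [this, prob_compl_eq_zero_iff hmeas]
      exact hCN
    calc ∫ p, g p ∂γ = ∫ p, u p.1 ∂γ := integral_congr_ae hae
      _ = ∫ x, u x ∂μ := by
          rw [← hγ1, integral_map measurable_fst.aemeasurable hu.aestronglyMeasurable]
  -- conclude
  have hmem : (∫ p, g p ∂γ) ∈ {r : ℝ | ∃ η : Measure (X × Y),
      η.map Prod.fst = μ ∧ η.map Prod.snd = ν ∧ r = ∫ p, g p ∂η} :=
    ⟨γ, hγ1, hγ2, rfl⟩
  refine le_antisymm (le_csInf ⟨_, hmem⟩ ?_) (csInf_le ⟨∫ p, g p ∂γ, ?_⟩ hmem)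
  · rintro r ⟨η, hη1, hη2, rfl⟩
    rw [hγeq]
    exact hlb η hη1
  · rintro r ⟨η, hη1, hη2, rfl⟩
    rw [hγeq]
    exact hlb η hη1
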